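/- arXiv:0901.1652 — 2 statements merged into one kernel-verified Lean document; each statement's English description precedes it below -/
import Mathlib

section
/- Let V be a finite-dimensional real inner product space with inner product [·;·], let M : V → V be a symmetric positive-definite operator, and let v₁, …, vₙ ∈ V. Then the operator M − Σ_{i=1}^n v_i [v_i; ·] is positive semidefinite if and only if the symmetric n×n real matrix K with entries K_{ij} = [v_i; M^{-1} v_j] satisfies 0 ≤ K ≤ Id (i.e. both K and Id − K are positive semidefinite). -/
open scoped BigOperators RealInnerProductSpace
open Matrix

/-- **Lemma (Loewner criterion).** Let `V` be a finite-dimensional real inner product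
space, `M : V → V` symmetric positive definite with inverse `N`, and `v₁, …, vₙ ∈ V`.
Then `M - ∑ᵢ vᵢ [vᵢ; ·]` is positive semidefinite iff the `n×n` matrix
`K_{ij} = [vᵢ; M⁻¹ vⱼ]` satisfies `0 ≤ K ≤ Id` in the Loewner order. -/
theorem loewner_criterion
    {V : Type*} [NormedAddCommGroup V] [InnerProductSpace ℝ V] [FiniteDimensional ℝ V]
    (M N : V →ₗ[ℝ] V)
    (hMsym : ∀ u w : V, ⟪M u, w⟫ = ⟪u, M w⟫)
    (hMpd : ∀ u : V, u ≠ 0 → 0 < ⟪u, M u⟫)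
    (hMN : M ∘ₗ N = LinearMap.id) (hNM : N ∘ₗ M = LinearMap.id)
    {n : ℕ} (v : Fin n → V) :
    (∀ w : V, 0 ≤ ⟪w, M w⟫ - ∑ i : Fin n, ⟪v i, w⟫ ^ 2) ↔
      ((Matrix.of fun i j : Fin n => ⟪v i, N (v j)⟫).PosSemidef ∧
        ((1 : Matrix (Fin n) (Fin n) ℝ) -
            Matrix.of fun i j : Fin n => ⟪v i, N (v j)⟫).PosSemidef) := by
  have hMNapp : ∀ w : V, M (N w) = w := fun w => LinearMap.congr_fun hMN w
  have hNMapp : ∀ w : V, N (M w) = w := fun w => LinearMap.congr_fun hNM w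
  have hMpsd : ∀ w : V, 0 ≤ ⟪w, M w⟫ := by
    intro w
    rcases eq_or_ne w 0 with h | h
    · simp [h]
    · exact (hMpd w h).le
  have hNsym : ∀ a b : V, ⟪N a, b⟫ = ⟪a, N b⟫ := by
    intro a b
    calc ⟪N a, b⟫ = ⟪N a, M (N b)⟫ := by rw [hMNapp]
    _ = ⟪M (N a), N b⟫ := (hMsym (N a) (N b)).symm
    _ = ⟪a, N b⟫ := by rw [hMNapp]
  have hNpsd : ∀ w : V, 0 ≤ ⟪w, N w⟫ := by
    intro w
    have : ⟪w, N w⟫ = ⟪N w, M (N w)⟫ := by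
      rw [hMNapp, real_inner_comm]
    rw [this]
    exact hMpsd (N w)
  -- Cauchy–Schwarz for the bilinear form ⟪·, M ·⟫
  have hCS : ∀ a b : V, ⟪a, M b⟫ ^ 2 ≤ ⟪a, M a⟫ * ⟪b, M b⟫ := by
    intro a b
    rcases eq_or_ne b 0 with hb | hb
    · simp [hb]
    · have hB : 0 < ⟪b, M b⟫ := hMpd b hb
      set t : ℝ := ⟪a, M b⟫ / ⟪b, M b⟫ with ht
      have h0 : 0 ≤ ⟪a - t • b, M (a - t • b)⟫ := hMpsd _
      have hexp : ⟪a - t • b, M (a - t • b)⟫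
          = ⟪a, M a⟫ - 2 * t * ⟪a, M b⟫ + t ^ 2 * ⟪b, M b⟫ := by
        have hba : ⟪b, M a⟫ = ⟪a, M b⟫ := by
          rw [← hMsym a b, real_inner_comm]
        simp only [map_sub, _root_.map_smul, inner_sub_left, inner_sub_right,
          real_inner_smul_left, real_inner_smul_right, hba]
        ring
      rw [hexp, ht] at h0
      have hB' : ⟪b, M b⟫ ≠ 0 := ne_of_gt hB
      have e : ⟪a, M a⟫ - 2 * (⟪a, M b⟫ / ⟪b, M b⟫) * ⟪a, M b⟫
          + (⟪a, M b⟫ / ⟪b, M b⟫) ^ 2 * ⟪b, M b⟫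
          = ⟪a, M a⟫ - ⟪a, M b⟫ ^ 2 / ⟪b, M b⟫ := by
        field_simp
        ring
      rw [e] at h0
      have h1 : ⟪a, M b⟫ ^ 2 / ⟪b, M b⟫ ≤ ⟪a, M a⟫ := by linarith
      exact (div_le_iff₀ hB).mp h1
  set u : (Fin n → ℝ) → V := fun x => ∑ i, x i • v i with hu
  set K : Matrix (Fin n) (Fin n) ℝ :=
    Matrix.of fun i j : Fin n => ⟪v i, N (v j)⟫ with hKdef
  have hKapply : ∀ i j, K i j = ⟪v i, N (v j)⟫ := fun i j => rfl
  have hKmul : ∀ (x : Fin n → ℝ) (i : Fin n), (K *ᵥ x) i = ⟪v i, N (u x)⟫ := by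
    intro x i
    simp only [Matrix.mulVec, dotProduct, hKapply, hu, map_sum, _root_.map_smul,
      inner_sum, real_inner_smul_right]
    exact Finset.sum_congr rfl fun j _ => mul_comm _ _
  have hquad : ∀ x : Fin n → ℝ, x ⬝ᵥ (K *ᵥ x) = ⟪u x, N (u x)⟫ := by
    intro x
    simp only [dotProduct, hKmul]
    rw [hu]
    simp only [sum_inner, real_inner_smul_left]
  have hKherm : K.IsHermitian := by
    ext i j
    simp only [Matrix.conjTranspose_apply, star_trivial, hKapply]
    rw [← hNsym (v j) (v i), real_inner_comm]
  constructor
  · intro h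
    have hIK : ∀ x : Fin n → ℝ, x ⬝ᵥ (K *ᵥ x) ≤ ∑ i, x i ^ 2 := by
      intro x
      have hw := h (N (u x))
      have ht : ⟪N (u x), M (N (u x))⟫ = ⟪u x, N (u x)⟫ := by
        rw [hMNapp, real_inner_comm]
      rw [ht] at hw
      set t : ℝ := ⟪u x, N (u x)⟫ with htdef
      set s : ℝ := ∑ i, ⟪v i, N (u x)⟫ ^ 2 with hsdef
      -- hw : 0 ≤ t - s
      have htx : t = ∑ i, x i * ⟪v i, N (u x)⟫ := by
        rw [htdef, hu]
        simp only [sum_inner, real_inner_smul_left]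
      have hcs2 : (∑ i, x i * ⟪v i, N (u x)⟫) ^ 2 ≤ (∑ i, x i ^ 2) * s := by
        rw [hsdef]
        exact Finset.sum_mul_sq_le_sq_mul_sq Finset.univ x _
      have htpos : 0 ≤ t := hNpsd (u x)
      have hxsq : 0 ≤ ∑ i, x i ^ 2 := Finset.sum_nonneg fun i _ => sq_nonneg _
      rw [hquad]
      rw [← htx] at hcs2
      nlinarith [hcs2, hw, htpos, hxsq]
    refine ⟨Matrix.posSemidef_iff_dotProduct_mulVec.mpr ⟨hKherm, fun x => ?_⟩, Matrix.posSemidef_iff_dotProduct_mulVec.mpr ⟨?_, fun x => ?_⟩⟩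
    · simp only [star_trivial]
      rw [hquad]
      exact hNpsd _
    · exact (Matrix.isHermitian_one).sub hKherm
    · simp only [star_trivial, Matrix.sub_mulVec, Matrix.one_mulVec,
        dotProduct_sub]
      have : x ⬝ᵥ x = ∑ i, x i ^ 2 := by
        simp [dotProduct, sq]
      rw [this]
      linarith [hIK x]
  · rintro ⟨-, hIK⟩
    intro w
    set x : Fin n → ℝ := fun i => ⟪v i, w⟫ with hx
    set s : ℝ := ∑ i, x i ^ 2 with hs
    have hs0 : 0 ≤ s := Finset.sum_nonneg fun i _ => sq_nonneg _
    have huw : ⟪u x, w⟫ = s := by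
      rw [hu, hs]
      simp only [sum_inner, real_inner_smul_left, hx, sq]
    have hIKx := hIK.dotProduct_mulVec_nonneg x
    simp only [star_trivial, Matrix.sub_mulVec, Matrix.one_mulVec,
      dotProduct_sub] at hIKx
    have hxx : x ⬝ᵥ x = s := by simp [dotProduct, hs, sq]
    rw [hxx, hquad] at hIKx
    set t : ℝ := ⟪u x, N (u x)⟫ with htdef
    have htpos : 0 ≤ t := hNpsd (u x)
    -- hIKx : 0 ≤ s - t
    have hcs := hCS (N (u x)) w
    have h1 : ⟪N (u x), M w⟫ = s := by
      rw [← hMsym (N (u x)) w, hMNapp, huw]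
    have h2 : ⟪N (u x), M (N (u x))⟫ = t := by
      rw [hMNapp, real_inner_comm, htdef]
    rw [h1, h2] at hcs
    have hQ : 0 ≤ ⟪w, M w⟫ := hMpsd w
    nlinarith [hcs, hIKx, hs0, hQ, htpos]
end

section
/- The logarithm of the determinant of the generator of the random walk in random environment is a convex function of the environment: for every β > 0, ε > 0 and L ≥ 2, the map t ↦ log det D_{β,ε}(t) is convex on ℝ^Λ. -/
open scoped BigOperators Classical
open MeasureTheory

noncomputable section

/-- The 3-dimensional discrete torus of side `L`. -/
abbrev Torus (L : ℕ) := Fin 3 → ZMod L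

/-- The unit vector in direction `i`. -/
def unitVec (L : ℕ) (i : Fin 3) : Torus L := fun j => if j = i then 1 else 0

/-- Nearest-neighbor relation on the torus. -/
def NN {L : ℕ} (x y : Torus L) : Prop :=
  x ≠ y ∧ ∃ i : Fin 3, y = x + unitVec L i ∨ y = x - unitVec L i

/-- Periodic (Euclidean) distance on the torus. -/
def torusDist {L : ℕ} (x y : Torus L) : ℝ :=
  Real.sqrt (∑ i : Fin 3, (min ((x i - y i).val) (L - (x i - y i).val) : ℝ) ^ 2)

variable {L : ℕ}

/-- Sum of a (symmetric) function over unordered nearest-neighbor pairs. -/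
def nnSum [NeZero L] (f : Torus L → Torus L → ℝ) : ℝ :=
  (1 / 2) * ∑ x : Torus L, ∑ y : Torus L, if NN x y then f x y else 0

/-- The matrix of the operator `D_{β,ε}(t)`, the symmetric operator on `ℝ^Λ` with
quadratic form `β ∑_{NN (ij)} e^{t_i+t_j}(v_i-v_j)² + ε ∑_k e^{t_k} v_k²`. -/
def Dmat [NeZero L] (β ε : ℝ) (t : Torus L → ℝ) : Matrix (Torus L) (Torus L) ℝ :=
  Matrix.of fun j k =>
    if j = k then
      β * (∑ i : Torus L, if NN i j then Real.exp (t i + t j) else 0) + ε * Real.exp (t j)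
    else if NN j k then -(β * Real.exp (t j + t k)) else 0

/-- The free energy (effective action) `F_{β,ε}(t)`. -/
def freeEnergy [NeZero L] (β ε : ℝ) (t : Torus L → ℝ) : ℝ :=
  β * nnSum (fun i j => Real.cosh (t i - t j) - 1)
    - (1 / 2) * Real.log (Dmat β ε t).det
    + ∑ k : Torus L, (t k - ε + ε * Real.cosh (t k))

/-- The expectation `⟨f⟩ = ∫ f(t) e^{-F_{β,ε}(t)} ∏ dt_k/√(2π)`. -/
def expect [NeZero L] (β ε : ℝ) (f : (Torus L → ℝ) → ℝ) : ℝ :=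
  ∫ t : Torus L → ℝ,
    f t * Real.exp (-(freeEnergy β ε t)) *
      ((Real.sqrt (2 * Real.pi))⁻¹) ^ (Fintype.card (Torus L))

/-! ### Auxiliary development -/
section Aux
open Matrix

lemma NN_symm {L : ℕ} {x y : Torus L} (h : NN x y) : NN y x := by
  obtain ⟨hne, i, h | h⟩ := h
  · exact ⟨hne.symm, i, Or.inr (by rw [h]; abel)⟩
  · exact ⟨hne.symm, i, Or.inl (by rw [h]; abel)⟩

lemma NN_irrefl {L : ℕ} (x : Torus L) : ¬ NN x x := fun h => h.1 rfl

/-- Cauchy–Binet-type expansion of `det (B * diagonal w * Bᵀ)` as a positive combination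
of monomials in the weights. -/
theorem det_BWBt {n ι : Type*} [Fintype n] [Fintype ι] [DecidableEq n] [DecidableEq ι]
    (B : Matrix n ι ℝ) (w : ι → ℝ) :
    (Nat.factorial (Fintype.card n) : ℝ) * (B * Matrix.diagonal w * Bᵀ).det
      = ∑ p : n → ι, (∏ k, w (p k)) * (B.submatrix id p).det ^ 2 := by
  have hBW : B * Matrix.diagonal w = Matrix.of (fun i j => B i j * w j) := by
    ext i j; simp [mul_diagonal]
  have hstep : (B * Matrix.diagonal w * Bᵀ).det
      = ∑ p : n → ι, (∏ i, w (p i) * B i (p i)) * (B.submatrix id p).det := by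
    calc (B * Matrix.diagonal w * Bᵀ).det
        = ∑ p : n → ι, ∑ σ : Equiv.Perm n,
            ((Equiv.Perm.sign σ : ℤ) : ℝ) * ∏ i, (B (σ i) (p i) * w (p i) * B i (p i)) := by
          rw [hBW]
          simp only [det_apply', mul_apply, of_apply, transpose_apply, Finset.prod_univ_sum,
            Finset.mul_sum, Fintype.piFinset_univ]
          rw [Finset.sum_comm]
      _ = _ := by
          refine Finset.sum_congr rfl fun p _ => ?_
          rw [det_apply', Finset.mul_sum]
          refine Finset.sum_congr rfl fun σ _ => ?_
          simp only [Finset.prod_mul_distrib, Matrix.submatrix_apply, id_eq]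
          ring
  rw [hstep]
  have hcomp : ∀ (τ : Equiv.Perm n),
      (∑ p : n → ι, (∏ i, w (p i) * B i (p i)) * (B.submatrix id p).det)
      = ∑ p : n → ι, (∏ i, w (p (τ i)) * B i (p (τ i))) * (B.submatrix id (p ∘ τ)).det := by
    intro τ
    have := Equiv.sum_comp (Equiv.arrowCongr τ.symm (Equiv.refl ι))
      (fun p : n → ι => (∏ i, w (p i) * B i (p i)) * (B.submatrix id p).det)
    rw [← this]
    exact Finset.sum_congr rfl fun p _ => rfl
  have hperm : ∀ (p : n → ι) (τ : Equiv.Perm n),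
      (∏ i, w (p (τ i)) * B i (p (τ i))) * (B.submatrix id (p ∘ τ)).det
      = (∏ i, w (p i)) * (B.submatrix id p).det *
          (((Equiv.Perm.sign τ : ℤ) : ℝ) * ∏ i, B i (p (τ i))) := by
    intro p τ
    have he : B.submatrix id (p ∘ ⇑τ) = (B.submatrix id p).submatrix id ⇑τ := rfl
    have h1 : (B.submatrix id (p ∘ τ)).det
        = ((Equiv.Perm.sign τ : ℤ) : ℝ) * (B.submatrix id p).det := by
      rw [he, Matrix.det_permute']
    have h2 : (∏ i, w (p (τ i))) = ∏ i, w (p i) := Equiv.prod_comp τ (fun i => w (p i))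
    rw [h1, Finset.prod_mul_distrib, h2]
    ring
  have hrow : ∀ p : n → ι,
      (∑ τ : Equiv.Perm n, ((Equiv.Perm.sign τ : ℤ) : ℝ) * ∏ i, B i (p (τ i)))
        = (B.submatrix id p).det := by
    intro p
    rw [← Matrix.det_transpose (B.submatrix id p), det_apply']
    exact Finset.sum_congr rfl fun τ _ => rfl
  calc (Nat.factorial (Fintype.card n) : ℝ) *
        ∑ p : n → ι, (∏ i, w (p i) * B i (p i)) * (B.submatrix id p).det
      = ∑ τ : Equiv.Perm n, ∑ p : n → ι,
          (∏ i, w (p (τ i)) * B i (p (τ i))) * (B.submatrix id (p ∘ τ)).det := by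
        rw [Finset.sum_congr rfl (fun τ _ => (hcomp τ).symm), Finset.sum_const,
          Finset.card_univ, Fintype.card_perm, nsmul_eq_mul]
    _ = ∑ p : n → ι, (∏ i, w (p i)) * (B.submatrix id p).det ^ 2 := by
        rw [Finset.sum_comm]
        refine Finset.sum_congr rfl fun p _ => ?_
        simp only [hperm p, mul_assoc, ← Finset.mul_sum]
        rw [hrow p]
        ring

/-- Index type for the columns of the incidence-type matrix. -/
abbrev TIdx (L : ℕ) := (Torus L × Torus L) ⊕ Torus L

/-- Incidence-type matrix: signed indicator columns of NN pairs plus identity columns. -/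
def Bmat (L : ℕ) : Matrix (Torus L) (TIdx L) ℝ :=
  Matrix.of fun x c =>
    Sum.elim
      (fun ij => if NN ij.1 ij.2 then
          (if x = ij.1 then (1 : ℝ) else 0) - (if x = ij.2 then 1 else 0) else 0)
      (fun k => if x = k then (1 : ℝ) else 0) c

/-- Positive exponential weights. -/
def wvec (L : ℕ) (β ε : ℝ) (t : Torus L → ℝ) : TIdx L → ℝ :=
  Sum.elim (fun ij => β / 2 * Real.exp (t ij.1 + t ij.2))
    (fun k => ε * Real.exp (t k))

lemma sum_if_left {α : Type*} [Fintype α] [DecidableEq α] (j : α) (X : α → α → ℝ) :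
    ∑ i : α, ∑ i' : α, (if j = i then X i i' else 0) = ∑ i' : α, X j i' := by
  have h : ∀ i : α, ∑ i' : α, (if j = i then X i i' else 0)
      = if j = i then ∑ i' : α, X i i' else 0 := by
    intro i; split_ifs <;> simp
  rw [Finset.sum_congr rfl fun i _ => h i, Finset.sum_ite_eq]
  simp

lemma sum_if_right {α : Type*} [Fintype α] [DecidableEq α] (j : α) (X : α → α → ℝ) :
    ∑ i : α, ∑ i' : α, (if j = i' then X i i' else 0) = ∑ i : α, X i j := by
  refine Finset.sum_congr rfl fun i _ => ?_
  rw [Finset.sum_ite_eq]; simp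

lemma sum_if_both {α : Type*} [Fintype α] [DecidableEq α] (j k : α) (X : α → α → ℝ) :
    ∑ i : α, ∑ i' : α, (if j = i then if k = i' then X i i' else 0 else 0) = X j k := by
  have h : ∀ i : α, ∑ i' : α, (if j = i then if k = i' then X i i' else 0 else 0)
      = if j = i then X i k else 0 := by
    intro i
    split_ifs with h
    · rw [Finset.sum_ite_eq]; simp
    · simp
  rw [Finset.sum_congr rfl fun i _ => h i, Finset.sum_ite_eq]
  simp

variable {L : ℕ}

lemma Dmat_factor [NeZero L] (β ε : ℝ) (t : Torus L → ℝ) :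
    Dmat β ε t = Bmat L * Matrix.diagonal (wvec L β ε t) * (Bmat L)ᵀ := by
  have hBW : Bmat L * Matrix.diagonal (wvec L β ε t)
      = Matrix.of (fun x c => Bmat L x c * wvec L β ε t c) := by
    ext x c; simp [Matrix.mul_diagonal]
  ext j k
  rw [hBW, Matrix.mul_apply]
  simp only [Matrix.of_apply, Matrix.transpose_apply]
  rw [Fintype.sum_sum_type]
  have hV : (∑ m : Torus L, Bmat L j (Sum.inr m) * wvec L β ε t (Sum.inr m)
        * Bmat L k (Sum.inr m)) = if j = k then ε * Real.exp (t j) else 0 := by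
    simp only [Bmat, wvec, Matrix.of_apply, Sum.elim_inr, ite_mul, one_mul, zero_mul,
      mul_ite, mul_one, mul_zero]
    rw [Finset.sum_ite_eq]
    by_cases h : j = k <;> simp [h, eq_comm]
  by_cases hjk : j = k
  · subst hjk
    have hpt : ∀ i i' : Torus L,
        Bmat L j (Sum.inl (i, i')) * wvec L β ε t (Sum.inl (i, i')) * Bmat L j (Sum.inl (i, i'))
        = (if j = i then (if NN i i' then β / 2 * Real.exp (t i + t i') else 0) else 0)
          + (if j = i' then (if NN i i' then β / 2 * Real.exp (t i + t i') else 0) else 0) := by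
      intro i i'
      simp only [Bmat, wvec, Matrix.of_apply, Sum.elim_inl]
      by_cases hN : NN i i'
      · have hne : i ≠ i' := hN.1
        by_cases h1 : j = i <;> by_cases h2 : j = i' <;> simp_all
      · simp [hN]
    have hP : (∑ c : Torus L × Torus L, Bmat L j (Sum.inl c) * wvec L β ε t (Sum.inl c)
          * Bmat L j (Sum.inl c))
        = β * ∑ i : Torus L, (if NN i j then Real.exp (t i + t j) else 0) := by
      rw [Fintype.sum_prod_type]
      simp only [hpt]
      simp only [Finset.sum_add_distrib]
      rw [sum_if_left, sum_if_right]
      have hsymm : (∑ i' : Torus L, (if NN j i' then β / 2 * Real.exp (t j + t i') else 0))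
          = ∑ i : Torus L, (if NN i j then β / 2 * Real.exp (t i + t j) else 0) := by
        refine Finset.sum_congr rfl fun i _ => ?_
        by_cases h : NN j i
        · rw [if_pos h, if_pos (NN_symm h), add_comm]
        · rw [if_neg h, if_neg (fun hh => h (NN_symm hh))]
      rw [hsymm, Finset.mul_sum]
      rw [← Finset.sum_add_distrib]
      refine Finset.sum_congr rfl fun i _ => ?_
      split_ifs <;> ring
    rw [hP, hV]
    simp [Dmat]
  · have hpt : ∀ i i' : Torus L,
        Bmat L j (Sum.inl (i, i')) * wvec L β ε t (Sum.inl (i, i')) * Bmat L k (Sum.inl (i, i'))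
        = (if j = i then if k = i' then
              (if NN j k then -(β / 2 * Real.exp (t j + t k)) else 0) else 0 else 0)
          + (if k = i then if j = i' then
              (if NN k j then -(β / 2 * Real.exp (t k + t j)) else 0) else 0 else 0) := by
      intro i i'
      simp only [Bmat, wvec, Matrix.of_apply, Sum.elim_inl]
      by_cases hN : NN i i'
      · have hne : i ≠ i' := hN.1
        by_cases h1 : j = i <;> by_cases h2 : j = i' <;> by_cases h3 : k = i <;>
          by_cases h4 : k = i' <;> simp_all
      · simp only [hN, if_false, zero_mul, mul_zero]
        by_cases h1 : j = i <;> by_cases h2 : j = i' <;> by_cases h3 : k = i <;>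
          by_cases h4 : k = i' <;> simp_all
    have hP : (∑ c : Torus L × Torus L, Bmat L j (Sum.inl c) * wvec L β ε t (Sum.inl c)
          * Bmat L k (Sum.inl c))
        = if NN j k then -(β * Real.exp (t j + t k)) else 0 := by
      rw [Fintype.sum_prod_type]
      simp only [hpt]
      simp only [Finset.sum_add_distrib]
      rw [sum_if_both, sum_if_both]
      by_cases h : NN j k
      · rw [if_pos h, if_pos (NN_symm h), if_pos h, add_comm (t k)]
        ring
      · rw [if_neg h, if_neg (fun hh => h (NN_symm hh)), if_neg h, add_zero]
    rw [hP, hV]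
    simp [Dmat, hjk]
end Aux

section Conv
open Matrix
variable {L : ℕ}

lemma wvec_pos [NeZero L] {β ε : ℝ} (hβ : 0 < β) (hε : 0 < ε) (t : Torus L → ℝ) (c : TIdx L) :
    0 < wvec L β ε t c := by
  cases c with
  | inl ij =>
      have h : wvec L β ε t (Sum.inl ij) = β / 2 * Real.exp (t ij.1 + t ij.2) := rfl
      rw [h]; positivity
  | inr k =>
      have h : wvec L β ε t (Sum.inr k) = ε * Real.exp (t k) := rfl
      rw [h]; positivity

lemma mul_exp_combo {K u v a b : ℝ} (hK : 0 < K) (hab : a + b = 1) :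
    K * Real.exp (a * u + b * v) = (K * Real.exp u) ^ a * (K * Real.exp v) ^ b := by
  have h3 : K * Real.exp (a * u + b * v) = Real.exp (Real.log K + (a * u + b * v)) := by
    rw [Real.exp_add (Real.log K) (a * u + b * v), Real.exp_log hK]
  rw [h3, Real.rpow_def_of_pos (mul_pos hK (Real.exp_pos u)),
    Real.rpow_def_of_pos (mul_pos hK (Real.exp_pos v)),
    Real.log_mul hK.ne' (Real.exp_ne_zero u), Real.log_mul hK.ne' (Real.exp_ne_zero v),
    Real.log_exp, Real.log_exp, ← Real.exp_add]
  congr 1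
  linear_combination (-(Real.log K)) * hab

lemma wvec_combo [NeZero L] {β ε a b : ℝ} (hβ : 0 < β) (hε : 0 < ε) (hab : a + b = 1)
    (t s : Torus L → ℝ) (c : TIdx L) :
    wvec L β ε (a • t + b • s) c = wvec L β ε t c ^ a * wvec L β ε s c ^ b := by
  cases c with
  | inl ij =>
      have h : (a • t + b • s) ij.1 + (a • t + b • s) ij.2
          = a * (t ij.1 + t ij.2) + b * (s ij.1 + s ij.2) := by
        simp only [Pi.add_apply, Pi.smul_apply, smul_eq_mul]; ring
      show β / 2 * Real.exp ((a • t + b • s) ij.1 + (a • t + b • s) ij.2) = _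
      rw [h, mul_exp_combo (by linarith) hab]; rfl
  | inr k =>
      have h : (a • t + b • s) k = a * t k + b * s k := by
        simp only [Pi.add_apply, Pi.smul_apply, smul_eq_mul]
      show ε * Real.exp ((a • t + b • s) k) = _
      rw [h, mul_exp_combo hε hab]; rfl

lemma Bmat_inr_submatrix [NeZero L] :
    (Bmat L).submatrix id (Sum.inr : Torus L → TIdx L) = (1 : Matrix (Torus L) (Torus L) ℝ) := by
  ext x y
  simp [Bmat, Matrix.submatrix_apply, Matrix.one_apply]

lemma det_rep [NeZero L] (β ε : ℝ) (t : Torus L → ℝ) :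
    (Nat.factorial (Fintype.card (Torus L)) : ℝ) * (Dmat β ε t).det
      = ∑ p : Torus L → TIdx L,
          (∏ k, wvec L β ε t (p k)) * ((Bmat L).submatrix id p).det ^ 2 := by
  rw [Dmat_factor]
  exact det_BWBt _ _

lemma det_Dmat_pos [NeZero L] {β ε : ℝ} (hβ : 0 < β) (hε : 0 < ε) (t : Torus L → ℝ) :
    0 < (Dmat β ε t).det := by
  have hfac : (0 : ℝ) < (Nat.factorial (Fintype.card (Torus L)) : ℝ) := by
    exact_mod_cast Nat.factorial_pos _
  have hpos : 0 < ∑ p : Torus L → TIdx L,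
      (∏ k, wvec L β ε t (p k)) * ((Bmat L).submatrix id p).det ^ 2 := by
    apply Finset.sum_pos'
    · intro p _
      exact mul_nonneg (Finset.prod_nonneg fun k _ => (wvec_pos hβ hε t _).le) (sq_nonneg _)
    · refine ⟨Sum.inr, Finset.mem_univ _, ?_⟩
      rw [Bmat_inr_submatrix, Matrix.det_one]
      have h : 0 < ∏ k : Torus L, wvec L β ε t (Sum.inr k) :=
        Finset.prod_pos fun k _ => wvec_pos hβ hε t _
      simpa using h
  rw [← det_rep β ε t] at hpos
  nlinarith

/-- Hölder's inequality in the form needed here. -/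
lemma sum_rpow_holder {κ : Type*} [Fintype κ] {a b : ℝ} (ha : 0 < a) (hb : 0 < b)
    (hab : a + b = 1) (u v : κ → ℝ) (hu : ∀ p, 0 ≤ u p) (hv : ∀ p, 0 ≤ v p) :
    ∑ p : κ, (u p) ^ a * (v p) ^ b ≤ (∑ p : κ, u p) ^ a * (∑ p : κ, v p) ^ b := by
  have hpq : Real.HolderConjugate a⁻¹ b⁻¹ := Real.HolderConjugate.inv_inv ha hb hab
  have H := Real.inner_le_Lp_mul_Lq_of_nonneg (s := Finset.univ) hpq
    (f := fun p => u p ^ a) (g := fun p => v p ^ b)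
    (fun p _ => Real.rpow_nonneg (hu p) a) (fun p _ => Real.rpow_nonneg (hv p) b)
  have e1 : ∀ p : κ, (u p ^ a) ^ a⁻¹ = u p := fun p => by
    rw [← Real.rpow_mul (hu p), mul_inv_cancel₀ ha.ne', Real.rpow_one]
  have e2 : ∀ p : κ, (v p ^ b) ^ b⁻¹ = v p := fun p => by
    rw [← Real.rpow_mul (hv p), mul_inv_cancel₀ hb.ne', Real.rpow_one]
  simpa only [e1, e2, one_div, inv_inv] using H

lemma det_Dmat_combo_le [NeZero L] {β ε a b : ℝ} (hβ : 0 < β) (hε : 0 < ε)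
    (ha : 0 < a) (hb : 0 < b) (hab : a + b = 1) (t s : Torus L → ℝ) :
    (Dmat β ε (a • t + b • s)).det ≤ (Dmat β ε t).det ^ a * (Dmat β ε s).det ^ b := by
  have hfac : (0 : ℝ) < (Nat.factorial (Fintype.card (Torus L)) : ℝ) := by
    exact_mod_cast Nat.factorial_pos _
  have hXpos : ∀ p : Torus L → TIdx L, 0 < ∏ k, wvec L β ε t (p k) :=
    fun p => Finset.prod_pos fun k _ => wvec_pos hβ hε t _
  have hYpos : ∀ p : Torus L → TIdx L, 0 < ∏ k, wvec L β ε s (p k) :=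
    fun p => Finset.prod_pos fun k _ => wvec_pos hβ hε s _
  have hcnn : ∀ p : Torus L → TIdx L, (0:ℝ) ≤ ((Bmat L).submatrix id p).det ^ 2 :=
    fun p => sq_nonneg _
  have key : (Nat.factorial (Fintype.card (Torus L)) : ℝ) * (Dmat β ε (a • t + b • s)).det
      ≤ ((Nat.factorial (Fintype.card (Torus L)) : ℝ) * (Dmat β ε t).det) ^ a *
        ((Nat.factorial (Fintype.card (Torus L)) : ℝ) * (Dmat β ε s).det) ^ b := by
    rw [det_rep β ε (a • t + b • s), det_rep β ε t, det_rep β ε s]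
    have hterm : ∀ p : Torus L → TIdx L,
        (∏ k, wvec L β ε (a • t + b • s) (p k)) * ((Bmat L).submatrix id p).det ^ 2
        = ((∏ k, wvec L β ε t (p k)) * ((Bmat L).submatrix id p).det ^ 2) ^ a *
          ((∏ k, wvec L β ε s (p k)) * ((Bmat L).submatrix id p).det ^ 2) ^ b := by
      intro p
      have h1 : (∏ k, wvec L β ε (a • t + b • s) (p k))
          = (∏ k, wvec L β ε t (p k)) ^ a * (∏ k, wvec L β ε s (p k)) ^ b := by
        calc (∏ k, wvec L β ε (a • t + b • s) (p k))
            = ∏ k, (wvec L β ε t (p k) ^ a * wvec L β ε s (p k) ^ b) :=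
              Finset.prod_congr rfl fun k _ => wvec_combo hβ hε hab t s (p k)
          _ = _ := by
              rw [Finset.prod_mul_distrib,
                Real.finset_prod_rpow _ _ (fun k _ => (wvec_pos hβ hε t _).le) a,
                Real.finset_prod_rpow _ _ (fun k _ => (wvec_pos hβ hε s _).le) b]
      have h2 : (((Bmat L).submatrix id p).det ^ 2 : ℝ) ^ a *
          (((Bmat L).submatrix id p).det ^ 2 : ℝ) ^ b = ((Bmat L).submatrix id p).det ^ 2 := by
        rw [← Real.rpow_add' (hcnn p) (by rw [hab]; norm_num), hab, Real.rpow_one]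
      rw [h1, Real.mul_rpow (hXpos p).le (hcnn p), Real.mul_rpow (hYpos p).le (hcnn p)]
      linear_combination
        (-((∏ k, wvec L β ε t (p k)) ^ a * (∏ k, wvec L β ε s (p k)) ^ b)) * h2
    rw [Finset.sum_congr rfl (fun p _ => hterm p)]
    exact sum_rpow_holder ha hb hab _ _
      (fun p => mul_nonneg (hXpos p).le (hcnn p)) (fun p => mul_nonneg (hYpos p).le (hcnn p))
  have h1 : 0 < (Dmat β ε t).det := det_Dmat_pos hβ hε t
  have h2 : 0 < (Dmat β ε s).det := det_Dmat_pos hβ hε s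
  have hr : ((Nat.factorial (Fintype.card (Torus L)) : ℝ) * (Dmat β ε t).det) ^ a *
        ((Nat.factorial (Fintype.card (Torus L)) : ℝ) * (Dmat β ε s).det) ^ b
      = (Nat.factorial (Fintype.card (Torus L)) : ℝ) *
        ((Dmat β ε t).det ^ a * (Dmat β ε s).det ^ b) := by
    rw [Real.mul_rpow hfac.le h1.le, Real.mul_rpow hfac.le h2.le]
    have hN : (Nat.factorial (Fintype.card (Torus L)) : ℝ) ^ a *
        (Nat.factorial (Fintype.card (Torus L)) : ℝ) ^ b
        = (Nat.factorial (Fintype.card (Torus L)) : ℝ) := by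
      rw [← Real.rpow_add hfac, hab, Real.rpow_one]
    calc (Nat.factorial (Fintype.card (Torus L)) : ℝ) ^ a * (Dmat β ε t).det ^ a *
          ((Nat.factorial (Fintype.card (Torus L)) : ℝ) ^ b * (Dmat β ε s).det ^ b)
        = ((Nat.factorial (Fintype.card (Torus L)) : ℝ) ^ a *
            (Nat.factorial (Fintype.card (Torus L)) : ℝ) ^ b) *
          ((Dmat β ε t).det ^ a * (Dmat β ε s).det ^ b) := by ring
      _ = _ := by rw [hN]
  rw [hr] at key
  exact le_of_mul_le_mul_left key hfac

end Conv


/-- **Convexity of `log det D_{β,ε}`.** For every `β > 0`, `ε > 0` and torus side `L ≥ 2`,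
the map `t ↦ log det D_{β,ε}(t)` is convex on `ℝ^Λ`. -/
theorem logDet_convex (β ε : ℝ) (hβ : 0 < β) (hε : 0 < ε) (L : ℕ) :
    ConvexOn ℝ Set.univ (fun t : Torus (L + 2) → ℝ => Real.log (Dmat β ε t).det) := by
  refine ⟨convex_univ, ?_⟩
  intro t _ s _ a b ha hb hab
  rcases eq_or_lt_of_le ha with rfl | ha'
  · have hb1 : b = 1 := by linarith
    subst hb1; simp
  rcases eq_or_lt_of_le hb with rfl | hb'
  · have ha1 : a = 1 := by linarith
    subst ha1; simp
  have key := det_Dmat_combo_le (L := L + 2) hβ hε ha' hb' hab t s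
  have h1 : 0 < (Dmat β ε t).det := det_Dmat_pos hβ hε t
  have h2 : 0 < (Dmat β ε s).det := det_Dmat_pos hβ hε s
  have h3 : 0 < (Dmat β ε (a • t + b • s)).det := det_Dmat_pos hβ hε _
  calc Real.log (Dmat β ε (a • t + b • s)).det
      ≤ Real.log ((Dmat β ε t).det ^ a * (Dmat β ε s).det ^ b) := Real.log_le_log h3 key
    _ = a * Real.log (Dmat β ε t).det + b * Real.log (Dmat β ε s).det := by
        rw [Real.log_mul (ne_of_gt (Real.rpow_pos_of_pos h1 a))
          (ne_of_gt (Real.rpow_pos_of_pos h2 b)), Real.log_rpow h1, Real.log_rpow h2]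


end
end
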